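/- Let κ ∈ ℝ with κ ≠ 0, let A, B : ℝ² → Mat₂(ℂ) be differentiable matrix-valued functions of (z,t) satisfying the flatness condition ∂ₜA − ∂_zB + (1/κ)(AB − BA) = 0 pointwise, and let γ : ℝ² → Mat₂(ℂ) be twice continuously differentiable (so that its mixed second partial derivatives commute). Define α = κ∂_zγ − (Aγ − γA) and β = κ∂ₜγ − (Bγ − γB). Then the pair (α, β) satisfies the linearized flatness equation ∂ₜα − ∂_zβ + (1/κ)((αB − Bα) + (Aβ − βA)) = 0 pointwise. -/

import Mathlib

open Matrix

section helpers

private lemma slice1 (f : ℝ × ℝ → ℂ) (z t : ℝ) (hf : DifferentiableAt ℝ f (z, t)) :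
    HasDerivAt (fun w => f (w, t)) (fderiv ℝ f (z, t) (1, 0)) z := by
  have h : HasDerivAt (fun w : ℝ => (w, t)) ((1 : ℝ), (0 : ℝ)) z :=
    HasDerivAt.prodMk (hasDerivAt_id z) (hasDerivAt_const z t)
  exact HasFDerivAt.comp_hasDerivAt _ hf.hasFDerivAt h

private lemma slice2 (f : ℝ × ℝ → ℂ) (z t : ℝ) (hf : DifferentiableAt ℝ f (z, t)) :
    HasDerivAt (fun s => f (z, s)) (fderiv ℝ f (z, t) (0, 1)) t := by
  have h : HasDerivAt (fun s : ℝ => (z, s)) ((0 : ℝ), (1 : ℝ)) t :=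
    HasDerivAt.prodMk (hasDerivAt_const t z) (hasDerivAt_id t)
  exact HasFDerivAt.comp_hasDerivAt _ hf.hasFDerivAt h

private lemma mixed_t (f : ℝ × ℝ → ℂ) (hf : ContDiff ℝ 2 f) (z t : ℝ) :
    HasDerivAt (fun s => deriv (fun w => f (w, s)) z)
      (fderiv ℝ (fderiv ℝ f) (z, t) (0, 1) (1, 0)) t := by
  have hd : Differentiable ℝ f := hf.differentiable (by norm_num)
  have hF : Differentiable ℝ (fderiv ℝ f) :=
    (hf.fderiv_right (m := 1) (by norm_num)).differentiable one_ne_zero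
  have key : ∀ s : ℝ, deriv (fun w => f (w, s)) z = fderiv ℝ f (z, s) (1, 0) :=
    fun s => (slice1 f z s (hd (z, s))).deriv
  have h1 : HasDerivAt (fun s : ℝ => (z, s)) ((0 : ℝ), (1 : ℝ)) t :=
    HasDerivAt.prodMk (hasDerivAt_const t z) (hasDerivAt_id t)
  have h2 : HasDerivAt (fun s => fderiv ℝ f (z, s))
      (fderiv ℝ (fderiv ℝ f) (z, t) (0, 1)) t :=
    HasFDerivAt.comp_hasDerivAt _ (hF (z, t)).hasFDerivAt h1
  have h3 := h2.clm_apply (hasDerivAt_const t ((1 : ℝ), (0 : ℝ)))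
  simp only [map_zero, add_zero] at h3
  exact h3.congr_of_eventuallyEq (Filter.Eventually.of_forall fun s => key s)

private lemma mixed_z (f : ℝ × ℝ → ℂ) (hf : ContDiff ℝ 2 f) (z t : ℝ) :
    HasDerivAt (fun w => deriv (fun s => f (w, s)) t)
      (fderiv ℝ (fderiv ℝ f) (z, t) (0, 1) (1, 0)) z := by
  have hd : Differentiable ℝ f := hf.differentiable (by norm_num)
  have hF : Differentiable ℝ (fderiv ℝ f) :=
    (hf.fderiv_right (m := 1) (by norm_num)).differentiable one_ne_zero
  have key : ∀ w : ℝ, deriv (fun s => f (w, s)) t = fderiv ℝ f (w, t) (0, 1) :=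
    fun w => (slice2 f w t (hd (w, t))).deriv
  have h1 : HasDerivAt (fun w : ℝ => (w, t)) ((1 : ℝ), (0 : ℝ)) z :=
    HasDerivAt.prodMk (hasDerivAt_id z) (hasDerivAt_const z t)
  have h2 : HasDerivAt (fun w => fderiv ℝ f (w, t))
      (fderiv ℝ (fderiv ℝ f) (z, t) (1, 0)) z :=
    HasFDerivAt.comp_hasDerivAt _ (hF (z, t)).hasFDerivAt h1
  have h3 := h2.clm_apply (hasDerivAt_const z ((0 : ℝ), (1 : ℝ)))
  simp only [map_zero, add_zero] at h3
  have hsymm : fderiv ℝ (fderiv ℝ f) (z, t) (1, 0) (0, 1)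
      = fderiv ℝ (fderiv ℝ f) (z, t) (0, 1) (1, 0) :=
    second_derivative_symmetric (fun y => (hd y).hasFDerivAt)
      ((hF (z, t)).hasFDerivAt) _ _
  rw [hsymm] at h3
  exact h3.congr_of_eventuallyEq (Filter.Eventually.of_forall fun w => key w)

end helpers

section HDsec

/-- Entrywise `HasDerivAt` for matrix-valued functions. -/
private def HD (f : ℝ → Matrix (Fin 2) (Fin 2) ℂ) (f' : Matrix (Fin 2) (Fin 2) ℂ) (x : ℝ) :
    Prop := ∀ i j : Fin 2, HasDerivAt (fun s => f s i j) (f' i j) x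

private lemma HD.sub {f g : ℝ → Matrix (Fin 2) (Fin 2) ℂ} {f' g' : Matrix (Fin 2) (Fin 2) ℂ}
    {x : ℝ} (hf : HD f f' x) (hg : HD g g' x) : HD (fun s => f s - g s) (f' - g') x := by
  intro i j
  simpa [Matrix.sub_apply] using (hf i j).fun_sub (hg i j)

private lemma HD.smul {f : ℝ → Matrix (Fin 2) (Fin 2) ℂ} {f' : Matrix (Fin 2) (Fin 2) ℂ}
    {x : ℝ} (κ : ℝ) (hf : HD f f' x) : HD (fun s => κ • f s) (κ • f') x := by
  intro i j
  simpa [Matrix.smul_apply] using (hf i j).fun_const_smul κ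

private lemma HD.mul {f g : ℝ → Matrix (Fin 2) (Fin 2) ℂ} {f' g' : Matrix (Fin 2) (Fin 2) ℂ}
    {x : ℝ} (hf : HD f f' x) (hg : HD g g' x) :
    HD (fun s => f s * g s) (f' * g x + f x * g') x := by
  intro i j
  have : HasDerivAt (fun s => ∑ k : Fin 2, f s i k * g s k j)
      (∑ k : Fin 2, (f' i k * g x k j + f x i k * g' k j)) x :=
    HasDerivAt.fun_sum fun k _ => (hf i k).mul (hg k j)
  have h2 : (∀ s : ℝ, (f s * g s) i j = ∑ k : Fin 2, f s i k * g s k j) :=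
    fun s => Matrix.mul_apply
  have h3 : (f' * g x + f x * g') i j
      = ∑ k : Fin 2, (f' i k * g x k j + f x i k * g' k j) := by
    simp [Matrix.add_apply, Matrix.mul_apply, Finset.sum_add_distrib]
  rw [h3]
  exact this.congr_of_eventuallyEq (Filter.Eventually.of_forall fun s => h2 s)

private lemma HD.of_deriv {f : ℝ → Matrix (Fin 2) (Fin 2) ℂ} {f' : Matrix (Fin 2) (Fin 2) ℂ}
    {x : ℝ} (hf : HD f f' x) :
    (Matrix.of fun i j => deriv (fun s => f s i j) x) = f' := by
  ext i j
  exact (hf i j).deriv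

end HDsec

private lemma matrix_algebra (c : ℂ) (hc : c ≠ 0)
    (A B Γ Γz Γt Γ2 At' Bz' : Matrix (Fin 2) (Fin 2) ℂ)
    (hfl : At' - Bz' + c⁻¹ • (A * B - B * A) = 0) :
    (c • Γ2 - (At' * Γ + A * Γt - (Γt * A + Γ * At')))
      - (c • Γ2 - (Bz' * Γ + B * Γz - (Γz * B + Γ * Bz')))
      + c⁻¹ • (((c • Γz - (A * Γ - Γ * A)) * B - B * (c • Γz - (A * Γ - Γ * A)))
        + (A * (c • Γt - (B * Γ - Γ * B)) - (c • Γt - (B * Γ - Γ * B)) * A)) = 0 := by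
  have hAt : At' = Bz' - c⁻¹ • (A * B - B * A) := by
    have h : At' - (Bz' - c⁻¹ • (A * B - B * A)) = 0 := by
      rw [← hfl]; abel
    exact sub_eq_zero.mp h
  subst hAt
  simp only [Matrix.mul_sub, Matrix.sub_mul, Matrix.mul_add, Matrix.add_mul,
    Matrix.smul_mul, Matrix.mul_smul, smul_sub, smul_add, smul_smul,
    inv_mul_cancel₀ hc, one_smul, Matrix.mul_assoc]
  abel

theorem gauge_solves_linearized_flatness
    (κ : ℝ) (hκ : κ ≠ 0)
    (A B γ : ℝ → ℝ → Matrix (Fin 2) (Fin 2) ℂ)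
    (hA : ∀ i j : Fin 2, Differentiable ℝ (fun p : ℝ × ℝ => A p.1 p.2 i j))
    (hB : ∀ i j : Fin 2, Differentiable ℝ (fun p : ℝ × ℝ => B p.1 p.2 i j))
    (hγ : ∀ i j : Fin 2, ContDiff ℝ 2 (fun p : ℝ × ℝ => γ p.1 p.2 i j))
    (hflat : ∀ z t : ℝ,
      (Matrix.of fun i j => deriv (fun s => A z s i j) t)
        - (Matrix.of fun i j => deriv (fun w => B w t i j) z)
        + κ⁻¹ • (A z t * B z t - B z t * A z t) = 0) :
    let α : ℝ → ℝ → Matrix (Fin 2) (Fin 2) ℂ := fun z t =>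
      κ • (Matrix.of fun i j => deriv (fun w => γ w t i j) z)
        - (A z t * γ z t - γ z t * A z t)
    let β : ℝ → ℝ → Matrix (Fin 2) (Fin 2) ℂ := fun z t =>
      κ • (Matrix.of fun i j => deriv (fun s => γ z s i j) t)
        - (B z t * γ z t - γ z t * B z t)
    ∀ z t : ℝ,
      (Matrix.of fun i j => deriv (fun s => α z s i j) t)
        - (Matrix.of fun i j => deriv (fun w => β w t i j) z)
        + κ⁻¹ • ((α z t * B z t - B z t * α z t) + (A z t * β z t - β z t * A z t)) = 0 := by
  intro α β z t
  have hαdef : ∀ w s : ℝ, α w s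
      = κ • (Matrix.of fun i j => deriv (fun w' => γ w' s i j) w)
        - (A w s * γ w s - γ w s * A w s) := fun _ _ => rfl
  have hβdef : ∀ w s : ℝ, β w s
      = κ • (Matrix.of fun i j => deriv (fun s' => γ w s' i j) s)
        - (B w s * γ w s - γ w s * B w s) := fun _ _ => rfl
  simp only [hαdef, hβdef]
  -- notation for the various derivative matrices at (z,t)
  set Γ2 : Matrix (Fin 2) (Fin 2) ℂ :=
    Matrix.of fun i j =>
      fderiv ℝ (fderiv ℝ (fun p : ℝ × ℝ => γ p.1 p.2 i j)) (z, t) (0, 1) (1, 0) with hΓ2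
  set Γt : Matrix (Fin 2) (Fin 2) ℂ :=
    Matrix.of fun i j => deriv (fun s => γ z s i j) t with hΓt
  set Γz : Matrix (Fin 2) (Fin 2) ℂ :=
    Matrix.of fun i j => deriv (fun w => γ w t i j) z with hΓz
  set At' : Matrix (Fin 2) (Fin 2) ℂ :=
    Matrix.of fun i j => deriv (fun s => A z s i j) t with hAt'
  set Bz' : Matrix (Fin 2) (Fin 2) ℂ :=
    Matrix.of fun i j => deriv (fun w => B w t i j) z with hBz'
  -- HD facts
  have hHDγt : HD (fun s => γ z s) Γt t := fun i j => by
    have h : DifferentiableAt ℝ (fun s => γ z s i j) t :=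
      DifferentiableAt.comp t (((hγ i j).differentiable (by norm_num)) (z, t))
        (DifferentiableAt.prodMk (differentiableAt_const z) differentiableAt_id)
    exact h.hasDerivAt
  have hHDγz : HD (fun w => γ w t) Γz z := fun i j => by
    have h : DifferentiableAt ℝ (fun w => γ w t i j) z :=
      DifferentiableAt.comp (g := fun p : ℝ × ℝ => γ p.1 p.2 i j) (f := fun w : ℝ => (w, t)) z (((hγ i j).differentiable (by norm_num)) (z, t))
        (DifferentiableAt.prodMk differentiableAt_id (differentiableAt_const t))
    exact h.hasDerivAt
  have hHDAt : HD (fun s => A z s) At' t := fun i j => by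
    have h : DifferentiableAt ℝ (fun s => A z s i j) t :=
      DifferentiableAt.comp t ((hA i j) (z, t))
        (DifferentiableAt.prodMk (differentiableAt_const z) differentiableAt_id)
    exact h.hasDerivAt
  have hHDBz : HD (fun w => B w t) Bz' z := fun i j => by
    have h : DifferentiableAt ℝ (fun w => B w t i j) z :=
      DifferentiableAt.comp (g := fun p : ℝ × ℝ => B p.1 p.2 i j) (f := fun w : ℝ => (w, t)) z ((hB i j) (z, t))
        (DifferentiableAt.prodMk differentiableAt_id (differentiableAt_const t))
    exact h.hasDerivAt
  have hmixt : HD (fun s => Matrix.of fun i j => deriv (fun w => γ w s i j) z) Γ2 t :=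
    fun i j => mixed_t (fun p : ℝ × ℝ => γ p.1 p.2 i j) (hγ i j) z t
  have hmixz : HD (fun w => Matrix.of fun i j => deriv (fun s => γ w s i j) t) Γ2 z :=
    fun i j => mixed_z (fun p : ℝ × ℝ => γ p.1 p.2 i j) (hγ i j) z t
  -- derivatives of α (in t) and β (in z)
  have hα : HD (fun s => κ • (Matrix.of fun i j => deriv (fun w' => γ w' s i j) z)
      - (A z s * γ z s - γ z s * A z s))
      (κ • Γ2 - (At' * γ z t + A z t * Γt - (Γt * A z t + γ z t * At'))) t :=
    (hmixt.smul κ).sub ((hHDAt.mul hHDγt).sub (hHDγt.mul hHDAt))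
  have hβ : HD (fun w => κ • (Matrix.of fun i j => deriv (fun s' => γ w s' i j) t)
      - (B w t * γ w t - γ w t * B w t))
      (κ • Γ2 - (Bz' * γ z t + B z t * Γz - (Γz * B z t + γ z t * Bz'))) z :=
    (hmixz.smul κ).sub ((hHDBz.mul hHDγz).sub (hHDγz.mul hHDBz))
  rw [hα.of_deriv, hβ.of_deriv]
  -- convert real smul to complex smul
  have hsm : ∀ (r : ℝ) (M : Matrix (Fin 2) (Fin 2) ℂ), r • M = (r : ℂ) • M := by
    intro r M
    ext i j
    simp [Matrix.smul_apply, Complex.real_smul]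
  have hflat' : At' - Bz' + ((κ : ℂ))⁻¹ • (A z t * B z t - B z t * A z t) = 0 := by
    have h := hflat z t
    rw [hsm] at h
    rw [Complex.ofReal_inv] at h
    exact h
  rw [hsm κ, hsm κ⁻¹, Complex.ofReal_inv]
  exact matrix_algebra (κ : ℂ) (Complex.ofReal_ne_zero.mpr hκ)
    (A z t) (B z t) (γ z t) Γz Γt Γ2 At' Bz' hflat'
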